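/- For all even integers b ≥ 2 and even k ≥ 4, and Δ ≥ b with Δ ≡ 2 (mod 4) or b ≡ 0 (mod 4), there exists a graph with arboricity at most b, maximum degree at most Δ, diameter at most k, and at least (8/b²)·(bΔ/8)^{k/2} vertices. -/

import Mathlib

/-- `G` has arboricity at most `b`: the edge set of `G` is the union of the edge
sets of `b` forests. -/
def ArboricityLE {V : Type*} (G : SimpleGraph V) (b : ℕ) : Prop :=
  ∃ F : Fin b → SimpleGraph V, (∀ i, (F i).IsAcyclic) ∧ (⨆ i, F i) = G

open SimpleGraph

namespace ALB

def sizeAt (a q : ℕ) (p : Bool) (t : ℕ) : ℕ := if p = decide (t % 2 = 1) then a else q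

lemma sizeAt_not_succ (a q : ℕ) (p : Bool) (t : ℕ) :
    sizeAt a q (!p) t = sizeAt a q p (t+1) := by
  rcases Nat.even_or_odd t with h | h <;> cases p <;>
    simp [sizeAt, Nat.even_iff, Nat.odd_iff, Nat.add_mod] at * <;> simp [h] <;> omega

lemma sizeAt_parity (a q : ℕ) (p : Bool) {t t' : ℕ} (h : t % 2 = t' % 2) :
    sizeAt a q p t = sizeAt a q p t' := by simp [sizeAt, h]

lemma sizeAt_pos {a q : ℕ} (ha : 0 < a) (hq : 0 < q) (p : Bool) (t : ℕ) :
    0 < sizeAt a q p t := by unfold sizeAt; split <;> assumption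

lemma sizeAt_le {a q : ℕ} (hqa : q ≤ a) (p : Bool) (t : ℕ) :
    sizeAt a q p t ≤ a := by unfold sizeAt; split <;> omega

def Vtx (a q M : ℕ) := {x : Bool × (Fin (M+1) → Fin a) // ∀ i : Fin (M+1), (x.2 i : ℕ) < sizeAt a q x.1 i}

instance (a q M : ℕ) : Fintype (Vtx a q M) := by unfold Vtx; infer_instance

instance (a q M : ℕ) : DecidableEq (Vtx a q M) := by unfold Vtx; infer_instance

def shiftRel {a q M : ℕ} (u v : Vtx a q M) : Prop :=
  v.1.1 = !u.1.1 ∧ ∀ (t : ℕ) (ht : t < M), v.1.2 ⟨t, by omega⟩ = u.1.2 ⟨t+1, by omega⟩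

def graph (a q M : ℕ) : SimpleGraph (Vtx a q M) where
  Adj u v := shiftRel u v ∨ shiftRel v u
  symm := ⟨fun u v h => h.symm⟩
  loopless := by
    refine ⟨fun u h => ?_⟩
    rcases h with ⟨h1, -⟩ | ⟨h1, -⟩ <;> simp at h1

variable {a q M : ℕ}

def outNbr (u : Vtx a q M) (c : Fin a) (hc : (c : ℕ) < sizeAt a q (!u.1.1) M) : Vtx a q M :=
  ⟨(!u.1.1, fun t => if h : (t : ℕ) < M then u.1.2 ⟨t+1, by omega⟩ else c), by
    intro i
    by_cases h : (i : ℕ) < M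
    · simpa [h, sizeAt_not_succ] using u.2 ⟨i+1, by omega⟩
    · have hi : (i : ℕ) = M := by omega
      simpa [h, hi] using hc⟩

lemma sizeAt_succ_not (p : Bool) (t : ℕ) : sizeAt a q (!p) (t+1) = sizeAt a q p t := by
  have := sizeAt_not_succ a q (!p) t
  simpa using this.symm

lemma letter_congr (x : Vtx a q M) {i j : Fin (M+1)} (h : (i : ℕ) = (j : ℕ)) :
    x.1.2 i = x.1.2 j := congrArg _ (Fin.ext h)

lemma vtx_ext {u v : Vtx a q M} (h1 : u.1.1 = v.1.1)
    (h2 : ∀ t : Fin (M+1), u.1.2 t = v.1.2 t) : u = v :=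
  Subtype.ext (Prod.ext h1 (funext h2))

lemma shiftRel_outNbr (u : Vtx a q M) (c : Fin a) (hc : (c : ℕ) < sizeAt a q (!u.1.1) M) :
    shiftRel u (outNbr u c hc) := by
  refine ⟨rfl, fun t ht => ?_⟩
  simp [outNbr, ht]

def inNbr (u : Vtx a q M) (c : Fin a) (hc : (c : ℕ) < sizeAt a q (!u.1.1) 0) : Vtx a q M :=
  ⟨(!u.1.1, fun t => if h : (t : ℕ) = 0 then c else u.1.2 ⟨t-1, by omega⟩), by
    intro i
    by_cases h : (i : ℕ) = 0
    · simpa [h] using hc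
    · have hs : sizeAt a q (!(u.1.1)) (i : ℕ) = sizeAt a q u.1.1 ((i:ℕ)-1) := by
        conv_lhs => rw [show (i : ℕ) = ((i:ℕ)-1)+1 by omega]
        exact sizeAt_succ_not _ _
      have := u.2 ⟨(i:ℕ)-1, by omega⟩
      simp only [dif_neg h]
      rw [hs]
      simpa using this⟩

lemma shiftRel_inNbr (u : Vtx a q M) (c : Fin a) (hc : (c : ℕ) < sizeAt a q (!u.1.1) 0) :
    shiftRel (inNbr u c hc) u := by
  refine ⟨by simp [inNbr], fun t ht => ?_⟩
  simp [inNbr]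

lemma shiftRel_det1 {u v w : Vtx a q M} (h1 : shiftRel u v) (h2 : shiftRel u w)
    (h : v.1.2 ⟨M, by omega⟩ = w.1.2 ⟨M, by omega⟩) : v = w := by
  apply vtx_ext (h1.1.trans h2.1.symm)
  intro t
  obtain ⟨tv, htv⟩ := t
  by_cases ht : tv < M
  · exact (h1.2 tv ht).trans (h2.2 tv ht).symm
  · calc v.1.2 ⟨tv, htv⟩ = v.1.2 ⟨M, by omega⟩ := letter_congr v (by simpa using by omega)
      _ = w.1.2 ⟨M, by omega⟩ := h
      _ = w.1.2 ⟨tv, htv⟩ := letter_congr w (by simpa using by omega)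

lemma shiftRel_det2 {u v w : Vtx a q M} (h1 : shiftRel v u) (h2 : shiftRel w u)
    (h : v.1.2 ⟨0, by omega⟩ = w.1.2 ⟨0, by omega⟩) : v = w := by
  have hp : v.1.1 = w.1.1 := by
    have a1 := h1.1; have a2 := h2.1
    cases hv : v.1.1 <;> cases hw : w.1.1 <;> simp_all
  apply vtx_ext hp
  intro t
  obtain ⟨tv, htv⟩ := t
  by_cases ht : tv = 0
  · subst ht
    exact h
  · calc v.1.2 ⟨tv, htv⟩ = v.1.2 ⟨(tv-1)+1, by omega⟩ := letter_congr v (by simp; omega)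
      _ = u.1.2 ⟨tv-1, by omega⟩ := (h1.2 (tv-1) (by omega)).symm
      _ = w.1.2 ⟨(tv-1)+1, by omega⟩ := h2.2 (tv-1) (by omega)
      _ = w.1.2 ⟨tv, htv⟩ := letter_congr w (by simp; omega)

lemma mem_out (u v : Vtx a q M) (h : shiftRel u v) :
    ∃ (c : Fin a) (hc : (c : ℕ) < sizeAt a q (!u.1.1) M), v = outNbr u c hc := by
  have hb : (v.1.2 ⟨M, by omega⟩ : ℕ) < sizeAt a q (!u.1.1) M := by
    have := v.2 ⟨M, by omega⟩
    rw [h.1] at this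
    simpa using this
  refine ⟨v.1.2 ⟨M, by omega⟩, hb, ?_⟩
  apply shiftRel_det1 h (shiftRel_outNbr u _ hb)
  simp [outNbr]

lemma mem_in (u v : Vtx a q M) (h : shiftRel v u) :
    ∃ (c : Fin a) (hc : (c : ℕ) < sizeAt a q (!u.1.1) 0), v = inNbr u c hc := by
  have hb : (v.1.2 ⟨0, by omega⟩ : ℕ) < sizeAt a q (!u.1.1) 0 := by
    have := v.2 ⟨0, by omega⟩
    have hvp : v.1.1 = !u.1.1 := by
      have := h.1
      cases hv : v.1.1 <;> cases hu : u.1.1 <;> simp_all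
    rw [hvp] at this
    simpa using this
  refine ⟨v.1.2 ⟨0, by omega⟩, hb, ?_⟩
  apply shiftRel_det2 h (shiftRel_inNbr u _ hb)
  simp [inNbr]

lemma path_length_le_two {V : Type*} {G : SimpleGraph V} (S : Set V)
    (hcross : ∀ ⦃u v⦄, G.Adj u v → (u ∈ S ↔ v ∉ S))
    (huniq : ∀ ⦃u v w⦄, u ∈ S → G.Adj u v → G.Adj u w → v = w)
    {x y : V} (p : G.Walk x y) (hp : p.IsPath) : p.length ≤ 2 := by
  match p with
  | .nil => simp
  | .cons h .nil => simp
  | .cons h1 (.cons h2 .nil) => simp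
  | .cons h1 (.cons h2 (.cons h3 r)) =>
    exfalso
    rename_i x1 x2 x3
    simp [SimpleGraph.Walk.isPath_def, List.nodup_cons] at hp
    by_cases hx1 : x1 ∈ S
    · exact hp.1.2.1 (huniq hx1 h1.symm h2)
    · have hx2 : x2 ∈ S := by have := hcross h2; tauto
      have := huniq hx2 h2.symm h3
      apply hp.2.1.2
      rw [this]
      exact r.start_mem_support

lemma acyclic_aux {V : Type*} {G : SimpleGraph V} (S : Set V)
    (hcross : ∀ ⦃u v⦄, G.Adj u v → (u ∈ S ↔ v ∉ S))
    (huniq : ∀ ⦃u v w⦄, u ∈ S → G.Adj u v → G.Adj u w → v = w) :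
    G.IsAcyclic := by
  intro v p hp
  have h3 := hp.three_le_length
  match p with
  | .cons h p' =>
    rw [SimpleGraph.Walk.cons_isCycle_iff] at hp
    have hlen : p'.length ≤ 2 := path_length_le_two S hcross huniq p' hp.1
    simp only [SimpleGraph.Walk.length_cons] at h3
    have hq2 : p'.length = 2 := by omega
    match p' with
    | .cons h2 (.cons h3' .nil) =>
      rename_i x1 x2
      by_cases hx1 : x1 ∈ S
      · exact G.irrefl ((huniq hx1 h.symm h2) ▸ h3')
      · have hv : v ∈ S := by have := hcross h; tauto
        exact G.irrefl ((huniq hv h h3'.symm) ▸ h2)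

def fOut (a q M : ℕ) (c : ℕ) : SimpleGraph (Vtx a q M) where
  Adj u v := (shiftRel u v ∧ u.1.1 = false ∧ (v.1.2 ⟨M, by omega⟩ : ℕ) = c)
    ∨ (shiftRel v u ∧ v.1.1 = false ∧ (u.1.2 ⟨M, by omega⟩ : ℕ) = c)
  symm := ⟨fun u v h => h.symm⟩
  loopless := by
    refine ⟨fun u h => ?_⟩
    rcases h with ⟨⟨h1, -⟩, -⟩ | ⟨⟨h1, -⟩, -⟩ <;> simp at h1

def fIn (a q M : ℕ) (c : ℕ) : SimpleGraph (Vtx a q M) where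
  Adj u v := (shiftRel u v ∧ u.1.1 = true ∧ (u.1.2 ⟨0, by omega⟩ : ℕ) = c)
    ∨ (shiftRel v u ∧ v.1.1 = true ∧ (v.1.2 ⟨0, by omega⟩ : ℕ) = c)
  symm := ⟨fun u v h => h.symm⟩
  loopless := by
    refine ⟨fun u h => ?_⟩
    rcases h with ⟨⟨h1, -⟩, -⟩ | ⟨⟨h1, -⟩, -⟩ <;> simp at h1

lemma fOut_acyclic (c : ℕ) : (fOut a q M c).IsAcyclic := by
  apply acyclic_aux {x : Vtx a q M | x.1.1 = false}
  · intro u v h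
    rcases h with ⟨h1, -, -⟩ | ⟨h1, -, -⟩ <;>
      · have := h1.1
        simp only [Set.mem_setOf_eq]
        cases hu : u.1.1 <;> cases hv : v.1.1 <;> simp_all
  · intro u v w hu h1 h2
    simp only [Set.mem_setOf_eq] at hu
    have g1 : shiftRel u v ∧ (v.1.2 ⟨M, by omega⟩ : ℕ) = c := by
      rcases h1 with ⟨hs, -, hc⟩ | ⟨hs, hf, -⟩
      · exact ⟨hs, hc⟩
      · exfalso; have := hs.1; simp_all
    have g2 : shiftRel u w ∧ (w.1.2 ⟨M, by omega⟩ : ℕ) = c := by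
      rcases h2 with ⟨hs, -, hc⟩ | ⟨hs, hf, -⟩
      · exact ⟨hs, hc⟩
      · exfalso; have := hs.1; simp_all
    exact shiftRel_det1 g1.1 g2.1 (Fin.ext (g1.2.trans g2.2.symm))

lemma fIn_acyclic (c : ℕ) : (fIn a q M c).IsAcyclic := by
  apply acyclic_aux {x : Vtx a q M | x.1.1 = false}
  · intro u v h
    rcases h with ⟨h1, -, -⟩ | ⟨h1, -, -⟩ <;>
      · have := h1.1
        simp only [Set.mem_setOf_eq]
        cases hu : u.1.1 <;> cases hv : v.1.1 <;> simp_all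
  · intro u v w hu h1 h2
    simp only [Set.mem_setOf_eq] at hu
    have g1 : shiftRel v u ∧ (v.1.2 ⟨0, by omega⟩ : ℕ) = c := by
      rcases h1 with ⟨hs, ht, -⟩ | ⟨hs, ht, hc⟩
      · exfalso; simp_all
      · exact ⟨hs, hc⟩
    have g2 : shiftRel w u ∧ (w.1.2 ⟨0, by omega⟩ : ℕ) = c := by
      rcases h2 with ⟨hs, ht, -⟩ | ⟨hs, ht, hc⟩
      · exfalso; simp_all
      · exact ⟨hs, hc⟩
    exact shiftRel_det2 g1.1 g2.1 (Fin.ext (g1.2.trans g2.2.symm))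

def famF (a q M b : ℕ) : Fin b → SimpleGraph (Vtx a q M) :=
  fun i => if (i : ℕ) < q then fOut a q M i else fIn a q M ((i : ℕ) - q)

lemma famF_sup (hM : M % 2 = 0) (b : ℕ) (hb2 : b = q + q) (hq : 0 < q) :
    (⨆ i, famF a q M b i) = graph a q M := by
  have cover1 : ∀ u v : Vtx a q M, shiftRel u v → (⨆ i, famF a q M b i).Adj u v := by
    intro u v h
    rw [SimpleGraph.iSup_adj]
    cases hu : u.1.1
    · -- out-edge, appended letter < q
      have hb : ((v.1.2 ⟨M, by omega⟩ : ℕ)) < q := by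
        have h1 := v.2 ⟨M, by omega⟩
        have hv : v.1.1 = true := by rw [h.1, hu]; rfl
        rw [hv] at h1
        simpa [sizeAt, hM] using h1
      refine ⟨⟨(v.1.2 ⟨M, by omega⟩ : ℕ), by omega⟩, ?_⟩
      have : ((⟨(v.1.2 ⟨M, by omega⟩ : ℕ), by omega⟩ : Fin b) : ℕ) < q := hb
      simp only [famF, if_pos this]
      exact Or.inl ⟨h, hu, rfl⟩
    · -- in-edge, removed letter < q
      have hb' : ((u.1.2 ⟨0, by omega⟩ : ℕ)) < q := by
        have h1 := u.2 ⟨0, by omega⟩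
        rw [hu] at h1
        simpa [sizeAt] using h1
      refine ⟨⟨q + (u.1.2 ⟨0, by omega⟩ : ℕ), by omega⟩, ?_⟩
      have hnl : ¬ ((⟨q + (u.1.2 ⟨0, by omega⟩ : ℕ), by omega⟩ : Fin b) : ℕ) < q := by simp
      simp only [famF, if_neg hnl]
      refine Or.inl ⟨h, hu, ?_⟩
      simp
  apply le_antisymm
  · apply iSup_le
    intro i u v h
    rcases (show ((i:ℕ) < q → (fOut a q M i).Adj u v) ∧ (¬ (i:ℕ) < q → (fIn a q M ((i:ℕ)-q)).Adj u v) → True from fun _ => trivial) with -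
    by_cases hi : (i : ℕ) < q
    · simp only [famF, if_pos hi] at h
      rcases h with ⟨hs, -, -⟩ | ⟨hs, -, -⟩
      · exact Or.inl hs
      · exact Or.inr hs
    · simp only [famF, if_neg hi] at h
      rcases h with ⟨hs, -, -⟩ | ⟨hs, -, -⟩
      · exact Or.inl hs
      · exact Or.inr hs
  · intro u v h
    rcases h with hs | hs
    · exact cover1 u v hs
    · exact ((⨆ i, famF a q M b i).adj_symm (cover1 v u hs))

lemma reach_step (j : ℕ) (hj : j + 1 ≤ M + 1) (u v : Vtx a q M)
    (hsz : sizeAt a q v.1.1 (M - j) = sizeAt a q (!u.1.1) M) :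
    ∃ (hc : ((v.1.2 ⟨M - j, by omega⟩ : ℕ)) < sizeAt a q (!u.1.1) M), True := by
  have h1 := v.2 ⟨M - j, by omega⟩
  rw [show ((⟨M - j, by omega⟩ : Fin (M+1)) : ℕ) = M - j from rfl, hsz] at h1
  exact ⟨h1, trivial⟩

lemma reach (j : ℕ) (hj : j ≤ M + 1) (u v : Vtx a q M)
    (hphase : v.1.1 = xor (decide (j % 2 = 1)) u.1.1)
    (hagree : ∀ (t : ℕ) (h : t + j < M + 1), v.1.2 ⟨t, by omega⟩ = u.1.2 ⟨t + j, h⟩) :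
    ∃ p : (graph a q M).Walk u v, p.length ≤ j := by
  induction j generalizing u with
  | zero =>
    have huv : u = v := by
      apply vtx_ext
      · simpa using hphase.symm
      · intro t
        obtain ⟨tv, htv⟩ := t
        exact (hagree tv (by omega)).symm
    cases huv
    exact ⟨SimpleGraph.Walk.nil, by simp⟩
  | succ j ih =>
    have hsz : sizeAt a q v.1.1 (M - j) = sizeAt a q (!u.1.1) M := by
      rcases Nat.mod_two_eq_zero_or_one j with hj2 | hj2
      · have e1 : (j + 1) % 2 = 1 := by omega
        have hv : v.1.1 = !u.1.1 := by rw [hphase]; simp [e1]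
        rw [hv]; exact sizeAt_parity a q _ (by omega)
      · have e1 : (j + 1) % 2 = 0 := by omega
        have hv : v.1.1 = u.1.1 := by rw [hphase]; simp [e1]
        rw [hv]
        have e2 : sizeAt a q u.1.1 (M - j) = sizeAt a q u.1.1 (M + 1) :=
          sizeAt_parity a q _ (by omega)
        rw [e2]
        have e3 := sizeAt_succ_not (a := a) (q := q) (!u.1.1) M
        simpa using e3
    obtain ⟨hc, -⟩ := reach_step j hj u v hsz
    have hadj : (graph a q M).Adj u (outNbr u (v.1.2 ⟨M - j, by omega⟩) hc) :=
      Or.inl (shiftRel_outNbr u _ hc)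
    have hphase1 : v.1.1 = xor (decide (j % 2 = 1))
        ((outNbr u (v.1.2 ⟨M - j, by omega⟩) hc).1.1) := by
      have hh : (outNbr u (v.1.2 ⟨M - j, by omega⟩) hc).1.1 = !u.1.1 := rfl
      rw [hh, hphase]
      rcases Nat.mod_two_eq_zero_or_one j with hj2 | hj2
      · have e1 : (j + 1) % 2 = 1 := by omega
        simp [e1, hj2]
      · have e1 : (j + 1) % 2 = 0 := by omega
        simp [e1, hj2]
    have hagree1 : ∀ (t : ℕ) (h : t + j < M + 1),
        v.1.2 ⟨t, by omega⟩ = (outNbr u (v.1.2 ⟨M - j, by omega⟩) hc).1.2 ⟨t + j, h⟩ := by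
      intro t h
      by_cases h2 : t + j < M
      · have hstep : (outNbr u (v.1.2 ⟨M - j, by omega⟩) hc).1.2 ⟨t + j, h⟩
            = u.1.2 ⟨t + j + 1, by omega⟩ := by
          simp [outNbr, h2]
        rw [hstep]
        rw [hagree t (by omega)]
        exact letter_congr u rfl
      · have ht : t = M - j := by omega
        have hstep : (outNbr u (v.1.2 ⟨M - j, by omega⟩) hc).1.2 ⟨t + j, h⟩
            = v.1.2 ⟨M - j, by omega⟩ := by
          simp [outNbr, h2]
        rw [hstep]
        exact letter_congr v (by simp [ht])
    obtain ⟨p1, hp1⟩ := ih (by omega) _ hphase1 hagree1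
    exact ⟨SimpleGraph.Walk.cons hadj p1, by simp; omega⟩

lemma reach_opp (hM : M % 2 = 0) (u v : Vtx a q M) (hph : v.1.1 = !u.1.1) :
    ∃ p : (graph a q M).Walk u v, p.length ≤ M + 1 := by
  apply reach (M+1) (le_refl _) u v
  · have : (M + 1) % 2 = 1 := by omega
    simp [this, hph]
  · intro t h
    exact absurd h (by omega)

lemma walkAll (hM : M % 2 = 0) (ha : 0 < a) (hq : 0 < q) (u v : Vtx a q M) :
    ∃ p : (graph a q M).Walk u v, p.length ≤ M + 2 := by
  by_cases hph : v.1.1 = !u.1.1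
  · obtain ⟨p, hp⟩ := reach_opp hM u v hph
    exact ⟨p, by omega⟩
  · -- same phase; route through a neighbor of v
    have hc : ((0 : ℕ)) < sizeAt a q (!v.1.1) M := sizeAt_pos ha hq _ _
    have hc' : (((⟨0, ha⟩ : Fin a) : ℕ)) < sizeAt a q (!v.1.1) M := hc
    set w := outNbr v ⟨0, ha⟩ hc' with hw
    have hadj : (graph a q M).Adj w v := Or.inr (shiftRel_outNbr v _ hc')
    have hphw : w.1.1 = !u.1.1 := by
      have h1 : w.1.1 = !v.1.1 := rfl
      rw [h1]
      cases hu : u.1.1 <;> cases hv : v.1.1 <;> simp_all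
    obtain ⟨p, hp⟩ := reach_opp hM u w hphw
    exact ⟨p.concat hadj, by simp [SimpleGraph.Walk.length_concat]; omega⟩

lemma range_ncard_le {α : Type*} {s : ℕ} (f : Fin s → α) : (Set.range f).ncard ≤ s := by
  rw [← Set.image_univ]
  calc (f '' Set.univ).ncard ≤ (Set.univ : Set (Fin s)).ncard := Set.ncard_image_le (Set.finite_univ)
    _ = s := by rw [Set.ncard_univ, Nat.card_eq_fintype_card, Fintype.card_fin]

lemma deg_le (hM : M % 2 = 0) (hqa : q ≤ a) (u : Vtx a q M) :
    ((graph a q M).neighborSet u).ncard ≤ 2 * sizeAt a q (!u.1.1) 0 := by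
  set s0 := sizeAt a q (!u.1.1) 0 with hs0
  have hsM : sizeAt a q (!u.1.1) M = s0 := sizeAt_parity a q _ (by omega)
  have hle : s0 ≤ a := sizeAt_le hqa _ _
  set outFn : Fin s0 → Vtx a q M := fun c =>
    outNbr u ⟨(c : ℕ), by omega⟩ (lt_of_lt_of_le c.2 (le_of_eq hsM.symm)) with houtFn
  set inFn : Fin s0 → Vtx a q M := fun c =>
    inNbr u ⟨(c : ℕ), by omega⟩ c.2 with hinFn
  have hsub : (graph a q M).neighborSet u ⊆ Set.range outFn ∪ Set.range inFn := by
    intro v hv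
    rcases hv with hs | hs
    · obtain ⟨c, hc, rfl⟩ := mem_out u v hs
      left
      refine ⟨⟨(c : ℕ), by omega⟩, ?_⟩
      simp [houtFn]
    · obtain ⟨c, hc, rfl⟩ := mem_in u v hs
      right
      refine ⟨⟨(c : ℕ), by omega⟩, ?_⟩
      simp [hinFn]
  calc ((graph a q M).neighborSet u).ncard
      ≤ (Set.range outFn ∪ Set.range inFn).ncard := Set.ncard_le_ncard hsub (Set.toFinite _)
    _ ≤ (Set.range outFn).ncard + (Set.range inFn).ncard := Set.ncard_union_le _ _
    _ ≤ s0 + s0 := Nat.add_le_add (range_ncard_le _) (range_ncard_le _)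
    _ = 2 * s0 := by omega

lemma card_ge (hM : M % 2 = 0) (hqa : q ≤ a) :
    a ^ (M/2 + 1) * q ^ (M/2) ≤ Fintype.card (Vtx a q M) := by
  classical
  set injFn : ((Fin (M/2+1) → Fin a) × (Fin (M/2) → Fin q)) → Vtx a q M := fun fg =>
    ⟨(false, fun t => if h : (t : ℕ) % 2 = 0
        then fg.1 ⟨(t : ℕ)/2, by omega⟩
        else ⟨(fg.2 ⟨(t : ℕ)/2, by omega⟩ : ℕ), by
          have := (fg.2 ⟨(t : ℕ)/2, by omega⟩).2; omega⟩), by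
      intro i
      by_cases h : (i : ℕ) % 2 = 0
      · have hsz : sizeAt a q false (i : ℕ) = a := by
          simp [sizeAt, show ¬((i:ℕ) % 2 = 1) by omega]
        simp only [dif_pos h, hsz]
        exact (fg.1 _).2
      · have hsz : sizeAt a q false (i : ℕ) = q := by
          simp [sizeAt, show ((i:ℕ) % 2 = 1) by omega]
        simp only [dif_neg h, hsz]
        exact (fg.2 _).2⟩ with hinjFn
  have hinj : Function.Injective injFn := by
    intro x y h
    have h2 : (injFn x).1.2 = (injFn y).1.2 := by rw [h]
    simp only [hinjFn] at h2
    have hf : x.1 = y.1 := by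
      funext i
      have hi := congrFun h2 ⟨2*(i:ℕ), by omega⟩
      have hmod : ((⟨2*(i:ℕ), by omega⟩ : Fin (M+1)) : ℕ) % 2 = 0 := by simp only [Fin.val_mk]; omega
      simp only [dif_pos hmod] at hi
      have hidx : (⟨((⟨2*(i:ℕ), by omega⟩ : Fin (M+1)) : ℕ)/2, by omega⟩ : Fin (M/2+1)) = i := by
        simp only [Fin.ext_iff, Fin.val_mk]; omega
      rwa [hidx] at hi
    have hg : x.2 = y.2 := by
      funext i
      have hi := congrFun h2 ⟨2*(i:ℕ)+1, by omega⟩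
      have hmod : ¬ ((⟨2*(i:ℕ)+1, by omega⟩ : Fin (M+1)) : ℕ) % 2 = 0 := by simp only [Fin.val_mk]; omega
      simp only [dif_neg hmod] at hi
      have hidx : (⟨((⟨2*(i:ℕ)+1, by omega⟩ : Fin (M+1)) : ℕ)/2, by omega⟩ : Fin (M/2)) = i := by
        simp only [Fin.ext_iff, Fin.val_mk]; omega
      simp only [show (⟨(2*(i:ℕ)+1)/2, by omega⟩ : Fin (M/2)) = i from hidx] at hi
      have hval : ((x.2 i : ℕ)) = ((y.2 i : ℕ)) := by
        simpa using congrArg Fin.val hi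
      exact Fin.ext hval
    exact Prod.ext hf hg
  have := Fintype.card_le_of_injective injFn hinj
  calc a ^ (M/2 + 1) * q ^ (M/2)
      = Fintype.card ((Fin (M/2+1) → Fin a) × (Fin (M/2) → Fin q)) := by
        simp [Fintype.card_fun]
    _ ≤ Fintype.card (Vtx a q M) := this

lemma comap_acyclic {α β : Type*} (f : α → β) (hf : Function.Injective f)
    {H : SimpleGraph β} (h : H.IsAcyclic) : (H.comap f).IsAcyclic := by
  intro v p hp
  have hmap := (SimpleGraph.Walk.map_isCycle_iff_of_injective
    (p := p) (f := SimpleGraph.Hom.comap f H) hf).mpr hp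
  exact h _ hmap

end ALB

/-- For all even integers `b ≥ 2` and even `k ≥ 4`, and `Δ ≥ b` with
`Δ ≡ 2 (mod 4)` or `b ≡ 0 (mod 4)`, there exists a graph with arboricity at
most `b`, maximum degree at most `Δ`, diameter at most `k`, and at least
`(8/b²)·(bΔ/8)^{k/2}` vertices. -/
theorem arboricity_lower_bound (b k Δ : ℕ) (hb : 2 ≤ b) (hbe : Even b)
    (hk : 4 ≤ k) (hke : Even k) (hΔ : b ≤ Δ) (hmod : Δ % 4 = 2 ∨ b % 4 = 0) :
    ∃ (n : ℕ) (G : SimpleGraph (Fin n)),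
      ArboricityLE G b ∧
      (∀ v, (G.neighborSet v).ncard ≤ Δ) ∧
      G.Connected ∧
      (∀ u v, G.dist u v ≤ k) ∧
      (8 / (b : ℚ) ^ 2) * ((b * Δ : ℚ) / 8) ^ (k / 2) ≤ n := by
  classical
  obtain ⟨q', hq'⟩ := hbe
  obtain ⟨k', hk'⟩ := hke
  set q : ℕ := b / 2 with hqdef
  set a : ℕ := Δ / 2 with hadef
  set M : ℕ := k - 2 with hMdef
  have hbq : b = q + q := by omega
  have hq1 : 1 ≤ q := by omega
  have ha1 : 1 ≤ a := by omega
  have hqa : q ≤ a := Nat.div_le_div_right hΔ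
  have hM : M % 2 = 0 := by omega
  have hM2 : 2 ≤ M := by omega
  set m : ℕ := M / 2 with hmdef
  have hm1 : 1 ≤ m := by omega
  have hkm : k / 2 = m + 1 := by omega
  set V := ALB.Vtx a q M with hV
  set G0 := ALB.graph a q M with hG0
  set n := Fintype.card V with hn
  set e : V ≃ Fin n := Fintype.equivFin V with he
  set G : SimpleGraph (Fin n) := G0.comap e.symm with hG
  have hGadj : ∀ x y : Fin n, G.Adj x y ↔ G0.Adj (e.symm x) (e.symm y) := by
    intro x y; rw [hG]; exact Iff.rfl
  refine ⟨n, G, ?_, ?_, ?_, ?_, ?_⟩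
  · -- arboricity
    refine ⟨fun i => (ALB.famF a q M b i).comap e.symm, ?_, ?_⟩
    · intro i
      apply ALB.comap_acyclic _ e.symm.injective
      show (ALB.famF a q M b i).IsAcyclic
      unfold ALB.famF
      split
      · exact ALB.fOut_acyclic _
      · exact ALB.fIn_acyclic _
    · have hsup := ALB.famF_sup (a := a) hM b hbq hq1
      have hsup' : (⨆ i, ALB.famF a q M b i) = G0 := by rw [hG0]; exact hsup
      ext x y
      rw [hGadj x y, ← hsup']
      simp only [SimpleGraph.iSup_adj, SimpleGraph.comap_adj]
  · -- degrees
    intro v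
    have himg : G.neighborSet v = e '' (G0.neighborSet (e.symm v)) := by
      ext w
      simp only [SimpleGraph.mem_neighborSet]
      rw [hGadj]
      constructor
      · intro h
        exact ⟨e.symm w, h, by simp⟩
      · rintro ⟨z, hz, rfl⟩
        simpa using hz
    rw [himg, Set.ncard_image_of_injective _ e.injective]
    calc (G0.neighborSet (e.symm v)).ncard
        ≤ 2 * ALB.sizeAt a q (!(e.symm v).1.1) 0 := ALB.deg_le hM hqa _
      _ ≤ Δ := by
          cases h : (!(e.symm v).1.1) <;> simp only [ALB.sizeAt] <;> norm_num <;> omega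
  · -- connected
    have v0 : V := ⟨(false, fun _ => ⟨0, by omega⟩), by
      intro i
      exact ALB.sizeAt_pos (by omega) (by omega) _ _⟩
    have hnpos : 0 < n := Fintype.card_pos_iff.mpr ⟨v0⟩
    haveI : Nonempty (Fin n) := ⟨⟨0, hnpos⟩⟩
    refine ⟨fun x y => ?_⟩
    obtain ⟨p, hp⟩ := ALB.walkAll hM ha1 hq1 (e.symm x) (e.symm y)
    let hom2 : G0 →g G := ⟨e, by
      intro u v h
      rw [hGadj]
      simpa using h⟩
    exact ⟨(p.map hom2).copy (by exact e.apply_symm_apply x) (by exact e.apply_symm_apply y)⟩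
  · -- distance
    intro x y
    obtain ⟨p, hp⟩ := ALB.walkAll hM ha1 hq1 (e.symm x) (e.symm y)
    let hom2 : G0 →g G := ⟨e, by
      intro u v h
      rw [hGadj]
      simpa using h⟩
    calc G.dist x y ≤ ((p.map hom2).copy (by exact e.apply_symm_apply x)
          (by exact e.apply_symm_apply y)).length := SimpleGraph.dist_le _
      _ = p.length := by simp
      _ ≤ k := by omega
  · -- counting
    have hcard := ALB.card_ge (a := a) (q := q) (M := M) hM hqa
    have hcard' : (a : ℚ) ^ (m + 1) * (q : ℚ) ^ m ≤ (n : ℚ) := by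
      have h1 : ((a ^ (M/2 + 1) * q ^ (M/2) : ℕ) : ℚ) ≤ ((Fintype.card (ALB.Vtx a q M) : ℕ) : ℚ) := by
        exact_mod_cast hcard
      rw [← hmdef] at h1
      push_cast at h1
      exact h1
    rw [hkm]
    set Q : ℚ := (q : ℚ) with hQ
    set X : ℚ := (Δ : ℚ) / 4 with hX
    have hQ1 : 1 ≤ Q := by rw [hQ]; exact_mod_cast hq1
    have hQ0 : Q ≠ 0 := by positivity
    have hX0 : 0 ≤ X := by rw [hX]; positivity
    have hbQ : (b : ℚ) = 2 * Q := by
      rw [hQ]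
      exact_mod_cast (by push_cast [hbq]; ring : (b:ℚ) = 2 * (q:ℚ))
    have hpow : Q ^ (m+1) = Q ^ (m-1) * Q ^ 2 := by
      rw [← pow_add]
      congr 1
      omega
    have e1 : (8 / (b : ℚ) ^ 2) * ((b * Δ : ℚ) / 8) ^ (m+1) = 2 * Q ^ (m-1) * X ^ (m+1) := by
      have hsplit : ((b * Δ : ℚ)) / 8 = Q * X := by rw [hbQ, hX]; push_cast; ring
      rw [hsplit, hbQ, mul_pow Q X, hpow]
      field_simp
      ring
    rw [e1]
    have main : 2 * Q ^ (m-1) * X ^ (m+1) ≤ (a : ℚ) ^ (m+1) * Q ^ m := by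
      rcases hmod with hc1 | hc2
      · -- Δ ≡ 2 mod 4 : Δ even, a = Δ/2 exactly
        have haX : (a : ℚ) = 2 * X := by
          rw [hX]
          have h2a : (2 * a : ℕ) = Δ := by omega
          have h2a' : (2 : ℚ) * (a : ℚ) = (Δ : ℚ) := by exact_mod_cast h2a
          linarith
        have h2m : (2:ℚ) ≤ 2^(m+1) := by
          calc (2:ℚ) = 2^1 := (pow_one 2).symm
            _ ≤ 2^(m+1) := by
              apply pow_le_pow_right₀ one_le_two
              omega
        have hQm : Q^(m-1) ≤ Q^m := pow_le_pow_right₀ hQ1 (by omega)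
        have t1 : 2 * Q^(m-1) ≤ 2^(m+1) * Q^m :=
          mul_le_mul h2m hQm (by positivity) (by positivity)
        calc 2 * Q ^ (m-1) * X ^ (m+1) ≤ (2^(m+1) * Q^m) * X ^ (m+1) :=
              mul_le_mul_of_nonneg_right t1 (by positivity)
          _ = (2*X) ^ (m+1) * Q ^ m := by rw [mul_pow]; ring
          _ = (a : ℚ) ^ (m+1) * Q ^ m := by rw [haX]
      · -- b ≡ 0 mod 4 : q ≥ 2 and a ≥ Δ/4
        have hQ2 : (2:ℚ) ≤ Q := by
          rw [hQ]
          exact_mod_cast (by omega : 2 ≤ q)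
        have haX : X ≤ (a : ℚ) := by
          rw [hX]
          have h4 : Δ ≤ 4 * a := by omega
          have h4' : (Δ : ℚ) ≤ 4 * (a : ℚ) := by exact_mod_cast h4
          linarith
        have hQsp : Q ^ m = Q * Q ^ (m-1) := by
          rw [← pow_succ']
          congr 1
          omega
        have t2 : 2 * Q^(m-1) ≤ Q^m := by
          rw [hQsp]
          exact mul_le_mul_of_nonneg_right hQ2 (by positivity)
        have tX : X^(m+1) ≤ (a:ℚ)^(m+1) := pow_le_pow_left₀ hX0 haX _
        calc 2 * Q ^ (m-1) * X ^ (m+1) ≤ Q^m * (a:ℚ)^(m+1) :=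
              mul_le_mul t2 tX (by positivity) (by positivity)
          _ = (a : ℚ) ^ (m+1) * Q ^ m := by ring
    exact main.trans hcard'
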